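/- Fix an integer s ≥ 1. Let M be the free R-module on generators x2, y2, x1_1, …, x1_s, y1_1, …, y1_s, x0, and let d : M → M be the R-linear map with d(x2) = U·y2 + U·y1_1; d(x1_j) = U²·y1_j + U·y1_{j+1} for 1 ≤ j ≤ s−1; d(x1_s) = U²·y1_s + x0; and d = 0 on y2, all y1_j, and x0. Then d ∘ d = 0, and the quotient of the homology H = ker d / im d by its U-torsion submodule is a free R-module of rank 1, generated by the image of the class of y2. -/

import Mathlib

noncomputable section

/-- `R = 𝔽₂[U]`, the polynomial ring in one variable over the field with two elements. -/
abbrev R : Type := Polynomial (ZMod 2)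

/-- The variable `U` of `R = 𝔽₂[U]`. -/
def U : R := Polynomial.X

/-- The free `R`-module on the generators `x2, y2, x0` (indexed by `Fin 3`),
`x1_1, …, x1_s` (the first `Fin s` factor) and `y1_1, …, y1_s` (the second `Fin s`
factor). -/
abbrev M (s : ℕ) : Type := (Fin 3 ⊕ Fin s ⊕ Fin s) → R

def x2 (s : ℕ) : M s := Pi.single (Sum.inl 0) 1
def y2 (s : ℕ) : M s := Pi.single (Sum.inl 1) 1
def x0 (s : ℕ) : M s := Pi.single (Sum.inl 2) 1
/-- `x1 s j` is the generator `x1_{j+1}` (so `j : Fin s` is the 0-based index). -/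
def x1 (s : ℕ) (j : Fin s) : M s := Pi.single (Sum.inr (Sum.inl j)) 1
/-- `y1 s j` is the generator `y1_{j+1}` (so `j : Fin s` is the 0-based index). -/
def y1 (s : ℕ) (j : Fin s) : M s := Pi.single (Sum.inr (Sum.inr j)) 1

lemma U_ne_zero : U ≠ 0 := Polynomial.X_ne_zero

lemma hU2 (a : R) : a + a = 0 := CharTwo.add_self_eq_zero a

/-- The functional sending `y2 ↦ 1`, `y1_j ↦ U^j`, `x0 ↦ U^(s+1)` and the `x`-generators
to `0`. -/
def fmap (s : ℕ) : M s →ₗ[R] R where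
  toFun m := m (Sum.inl 1) + (∑ j : Fin s, U ^ (j : ℕ) * m (Sum.inr (Sum.inr j)))
    + U ^ (s + 1) * m (Sum.inl 2)
  map_add' x y := by
    simp only [Pi.add_apply, mul_add, Finset.sum_add_distrib]; ring
  map_smul' r x := by
    simp only [Pi.smul_apply, smul_eq_mul, RingHom.id_apply, mul_add, Finset.mul_sum]
    rw [Finset.sum_congr rfl (fun i _ => by ring :
      ∀ (i : Fin s), i ∈ Finset.univ → U ^ (i : ℕ) * (r * x (Sum.inr (Sum.inr i)))
        = r * (U ^ (i : ℕ) * x (Sum.inr (Sum.inr i))))]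
    ring

lemma fmap_y2 (s : ℕ) : fmap s (y2 s) = 1 := by
  simp [fmap, y2, Pi.single_apply]

lemma fmap_y1 (s : ℕ) (j : Fin s) : fmap s (y1 s j) = U ^ (j : ℕ) := by
  simp [fmap, y1, Pi.single_apply]

lemma fmap_x0 (s : ℕ) : fmap s (x0 s) = U ^ (s + 1) := by
  simp [fmap, x0, Pi.single_apply]

lemma fmap_x2 (s : ℕ) : fmap s (x2 s) = 0 := by
  simp [fmap, x2, Pi.single_apply]

lemma fmap_x1 (s : ℕ) (j : Fin s) : fmap s (x1 s j) = 0 := by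
  simp [fmap, x1, Pi.single_apply]

set_option maxHeartbeats 2000000 in
/-- Fix `s ≥ 1`.  Let `M` be the free `R`-module on the generators
`x2, y2, x1_1, …, x1_s, y1_1, …, y1_s, x0`, and let `d : M → M` be the `R`-linear map with
`d x2 = U • y2 + U • y1_1`; `d x1_j = U² • y1_j + U • y1_{j+1}` for `1 ≤ j ≤ s - 1`;
`d x1_s = U² • y1_s + x0`; and `d = 0` on `y2`, all `y1_j`, and `x0`.  Then `d ∘ d = 0`,
and the quotient of the homology `H = ker d / im d` by its `U`-torsion submodule is a free
`R`-module of rank one generated by the image of the class of `y2`, i.e. the map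
`r ↦ r • [[y2]]` from `R` to that quotient is bijective. -/
theorem homology_mod_torsion_free_rank_one (s : ℕ) (hs : 1 ≤ s) (d : M s →ₗ[R] M s)
    (hx2 : d (x2 s) = U • y2 s + U • y1 s ⟨0, hs⟩)
    (hx1 : ∀ j : Fin s, ∀ h : (j : ℕ) + 1 < s,
      d (x1 s j) = (U ^ 2) • y1 s j + U • y1 s ⟨(j : ℕ) + 1, h⟩)
    (hx1s : d (x1 s ⟨s - 1, Nat.sub_lt hs Nat.one_pos⟩)
      = (U ^ 2) • y1 s ⟨s - 1, Nat.sub_lt hs Nat.one_pos⟩ + x0 s)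
    (hy2 : d (y2 s) = 0)
    (hy1 : ∀ j : Fin s, d (y1 s j) = 0) (hx0 : d (x0 s) = 0) :
    d ∘ₗ d = 0 ∧
    ∃ hz : y2 s ∈ LinearMap.ker d,
      Function.Bijective
        (LinearMap.toSpanSingleton R
          ((LinearMap.ker d ⧸ (LinearMap.range d).comap (LinearMap.ker d).subtype) ⧸
            Submodule.torsion' R
              (LinearMap.ker d ⧸ (LinearMap.range d).comap (LinearMap.ker d).subtype)
              (Submonoid.powers U))
          (Submodule.Quotient.mk (Submodule.Quotient.mk ⟨y2 s, hz⟩))) := by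
  have htwoM : ∀ a : M s, a + a = 0 := fun a => by
    rw [← two_smul R a, show (2:R) = 0 from CharTwo.two_eq_zero, zero_smul]
  have hnegM : ∀ a : M s, -a = a := fun a => neg_eq_of_add_eq_zero_left (htwoM a)
  set L : Fin s := ⟨s - 1, Nat.sub_lt hs Nat.one_pos⟩ with hL
  have hlast : ∀ j : Fin s, ¬ ((j:ℕ) + 1 < s) → j = L := by
    intro j hj; apply Fin.ext; have := j.isLt; simp only [hL]; omega
  -- decomposition of `d`
  have hdk : ∀ k : M s, d k = k (Sum.inl 0) • d (x2 s)
      + ∑ j : Fin s, k (Sum.inr (Sum.inl j)) • d (x1 s j) := by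
    intro k
    have hsingle : ∀ (i : Fin 3 ⊕ Fin s ⊕ Fin s),
        (Pi.single i (k i) : M s) = k i • (Pi.single i 1 : M s) := by
      intro i; funext w
      simp only [Pi.smul_apply, Pi.single_apply, smul_eq_mul, mul_ite, mul_one, mul_zero]
    conv_lhs => rw [← Finset.univ_sum_single k]
    rw [map_sum, Fintype.sum_sum_type, Fintype.sum_sum_type, Fin.sum_univ_three]
    simp only [hsingle, map_smul]
    rw [show (Pi.single (Sum.inl 1) (1:R) : M s) = y2 s from rfl,
      show (Pi.single (Sum.inl 2) (1:R) : M s) = x0 s from rfl, hy2, hx0]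
    have : ∀ j : Fin s, d (Pi.single (Sum.inr (Sum.inr j)) (1:R) : M s) = 0 := fun j => hy1 j
    simp only [this, smul_zero, add_zero, Finset.sum_const_zero]
    rfl
  -- coordinate lemmas
  have hA2a : d (x2 s) (Sum.inl 1) = U := by
    rw [hx2]; simp [y2, y1, Pi.single_apply]
  have hA2b : d (x2 s) (Sum.inl 2) = 0 := by
    rw [hx2]; simp [y2, y1, Pi.single_apply]
  have hA2c : ∀ i : Fin s, d (x2 s) (Sum.inr (Sum.inr i)) = if i = ⟨0, hs⟩ then U else 0 := by
    intro i; rw [hx2]; simp [y2, y1, Pi.single_apply]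
  have hA1a : ∀ j : Fin s, d (x1 s j) (Sum.inl 1) = 0 := by
    intro j; by_cases hjs : (j:ℕ)+1 < s
    · rw [hx1 j hjs]; simp [y1, Pi.single_apply]
    · rw [hlast j hjs, hx1s]; simp [y1, x0, Pi.single_apply]
  have hA1b : ∀ j : Fin s, d (x1 s j) (Sum.inl 2) = if j = L then 1 else 0 := by
    intro j; by_cases hjs : (j:ℕ)+1 < s
    · rw [hx1 j hjs]
      have : j ≠ L := by intro h; rw [h] at hjs; simp [hL] at hjs; omega
      simp [y1, Pi.single_apply, this]
    · rw [hlast j hjs, hx1s]; simp [y1, x0, Pi.single_apply]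
  have hA1c : ∀ (j i : Fin s), d (x1 s j) (Sum.inr (Sum.inr i)) =
      (if i = j then U^2 else 0) + (if (i:ℕ) = (j:ℕ)+1 then U else 0) := by
    intro j i; by_cases hjs : (j:ℕ)+1 < s
    · rw [hx1 j hjs]
      simp only [Pi.add_apply, Pi.smul_apply, y1, Pi.single_apply, smul_eq_mul,
        mul_ite, mul_one, mul_zero]
      congr 1
      · simp [Sum.inr.injEq]
      · by_cases hi : (i:ℕ) = (j:ℕ)+1
        · simp [hi, Fin.ext_iff]
        · simp [hi, Fin.ext_iff]
    · rw [hlast j hjs, hx1s]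
      have hns : ¬ ((i:ℕ) = (L:ℕ)+1) := by
        have := i.isLt; simp only [hL]; omega
      simp only [Pi.add_apply, Pi.smul_apply, y1, x0, Pi.single_apply, smul_eq_mul,
        mul_ite, mul_one, mul_zero, hns, if_false, add_zero]
      simp [Sum.inr.injEq]
  -- evaluation of `d k` at a coordinate
  have hcoord : ∀ (k : M s) (w : Fin 3 ⊕ Fin s ⊕ Fin s), d k w
      = k (Sum.inl 0) * d (x2 s) w + ∑ j : Fin s, k (Sum.inr (Sum.inl j)) * d (x1 s j) w := by
    intro k w
    rw [hdk k]
    simp [Finset.sum_apply]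
  -- the kernel components
  have hker : ∀ k : M s, d k = 0 →
      (k (Sum.inl 0) = 0 ∧ ∀ j : Fin s, k (Sum.inr (Sum.inl j)) = 0) := by
    intro k hk
    have hα : k (Sum.inl 0) = 0 := by
      have h := hcoord k (Sum.inl 1)
      rw [hk] at h
      simp only [Pi.zero_apply, hA2a, hA1a, mul_zero, Finset.sum_const_zero, add_zero] at h
      rcases mul_eq_zero.mp h.symm with h' | h'
      · exact h'
      · exact absurd h' U_ne_zero
    refine ⟨hα, ?_⟩
    have hβL : k (Sum.inr (Sum.inl L)) = 0 := by
      have h := hcoord k (Sum.inl 2)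
      rw [hk] at h
      simp only [Pi.zero_apply, hA2b, hA1b, mul_zero, zero_add, mul_ite, mul_one,
        Finset.sum_ite_eq', Finset.mem_univ, if_true] at h
      exact h.symm
    have hrel : ∀ t : ℕ, ∀ ht : t + 1 < s,
        k (Sum.inr (Sum.inl (⟨t+1, ht⟩ : Fin s))) * U^2
          + k (Sum.inr (Sum.inl (⟨t, by omega⟩ : Fin s))) * U = 0 := by
      intro t ht
      have h := hcoord k (Sum.inr (Sum.inr (⟨t+1, ht⟩ : Fin s)))
      rw [hk] at h
      have h0 : d (x2 s) (Sum.inr (Sum.inr (⟨t+1, ht⟩ : Fin s))) = 0 := by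
        rw [hA2c]
        have : (⟨t+1, ht⟩ : Fin s) ≠ ⟨0, hs⟩ := by simp [Fin.ext_iff]
        simp [this]
      simp only [Pi.zero_apply, h0, mul_zero, zero_add, hA1c, mul_add] at h
      rw [Finset.sum_add_distrib] at h
      have e1 : (∑ j : Fin s, k (Sum.inr (Sum.inl j))
          * (if (⟨t+1, ht⟩ : Fin s) = j then U^2 else 0))
          = k (Sum.inr (Sum.inl (⟨t+1, ht⟩ : Fin s))) * U^2 := by
        simp [mul_ite]
      have e2 : (∑ j : Fin s, k (Sum.inr (Sum.inl j))
          * (if ((⟨t+1, ht⟩ : Fin s) : ℕ) = (j:ℕ)+1 then U else 0))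
          = k (Sum.inr (Sum.inl (⟨t, by omega⟩ : Fin s))) * U := by
        rw [Finset.sum_eq_single_of_mem (⟨t, by omega⟩ : Fin s) (Finset.mem_univ _)]
        · simp
        · intro j _ hj
          have hj' : (j:ℕ) ≠ t := fun hh => hj (Fin.ext hh)
          have : ¬ (((⟨t+1, ht⟩ : Fin s) : ℕ) = (j:ℕ)+1) := by
            show ¬ (t+1 = (j:ℕ)+1); omega
          simp [this, Ne.symm hj']
      rw [e1, e2] at h
      exact h.symm
    have hβ : ∀ n : ℕ, n < s → ∀ hn : s - 1 - n < s,
        k (Sum.inr (Sum.inl (⟨s-1-n, hn⟩ : Fin s))) = 0 := by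
      intro n
      induction n with
      | zero =>
        intro _ hn
        have : (⟨s-1-0, hn⟩ : Fin s) = L := by apply Fin.ext; simp [hL]
        rw [this]; exact hβL
      | succ n ih =>
        intro hns hn
        have hlt : s - 1 - n < s := by omega
        have hprev := ih (by omega) hlt
        have ht : (s-1-(n+1)) + 1 < s := by omega
        have hr := hrel (s-1-(n+1)) ht
        have he : (⟨s-1-(n+1)+1, ht⟩ : Fin s) = ⟨s-1-n, hlt⟩ := by
          apply Fin.ext; simp; omega
        rw [he, hprev, zero_mul, zero_add] at hr
        have h2 : (⟨s-1-(n+1), by omega⟩ : Fin s) = ⟨s-1-(n+1), hn⟩ := rfl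
        rw [h2] at hr
        rcases mul_eq_zero.mp hr with h' | h'
        · exact h'
        · exact absurd h' U_ne_zero
    intro j
    have hj := j.isLt
    have : j = (⟨s-1-(s-1-(j:ℕ)), by omega⟩ : Fin s) := by apply Fin.ext; simp; omega
    rw [this]
    exact hβ (s-1-(j:ℕ)) (by omega) (by omega)
  -- fmap vanishes on the image of d
  have hfdx2 : fmap s (d (x2 s)) = 0 := by
    rw [hx2, map_add, map_smul, map_smul, fmap_y2, fmap_y1]
    simp only [smul_eq_mul, mul_one]
    rw [pow_zero, mul_one]
    exact hU2 U
  have hfdx1 : ∀ j : Fin s, fmap s (d (x1 s j)) = 0 := by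
    intro j; by_cases hjs : (j:ℕ)+1 < s
    · rw [hx1 j hjs, map_add, map_smul, map_smul, fmap_y1, fmap_y1]
      simp only [smul_eq_mul]
      linear_combination hU2 (U ^ ((j:ℕ)+2))
    · rw [hlast j hjs, hx1s, map_add, map_smul, fmap_y1, fmap_x0]
      simp only [smul_eq_mul]
      have h : (L:ℕ) = s-1 := rfl
      have e : U^2 * U^((L:ℕ)) = U^(s+1) := by
        rw [h, ← pow_add]; congr 1; omega
      rw [e]; exact hU2 _
  have hfd : ∀ m : M s, fmap s (d m) = 0 := by
    intro m
    rw [hdk m, map_add, map_smul, map_sum, hfdx2]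
    simp only [smul_eq_mul, mul_zero, zero_add]
    rw [Finset.sum_congr rfl (fun j _ => by rw [map_smul, hfdx1 j, smul_zero])]
    simp
  -- the torsion generators in the range of d
  have hT : ∀ jv : ℕ, ∀ hjv : jv < s,
      U • y1 s ⟨jv, hjv⟩ + U ^ (jv+1) • y2 s ∈ LinearMap.range d := by
    intro jv
    induction jv with
    | zero =>
      intro hjv
      refine ⟨x2 s, ?_⟩
      rw [hx2, pow_one, add_comm]
    | succ n ih =>
      intro hjv
      have hn : n < s := by omega
      have hprev := ih hn
      have h2 := hx1 ⟨n, hn⟩ (by simpa using hjv)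
      have key : U • y1 s ⟨n+1, hjv⟩ + U ^ (n+1+1) • y2 s
          = d (x1 s ⟨n, hn⟩) + U • (U • y1 s ⟨n, hn⟩ + U ^ (n+1) • y2 s) := by
        rw [h2, smul_add, smul_smul, smul_smul, ← pow_two,
          show U * U^(n+1) = U^(n+1+1) from (pow_succ' U (n+1)).symm]
        rw [add_add_add_comm, htwoM, zero_add]
      rw [key]
      exact Submodule.add_mem _ ⟨x1 s ⟨n, hn⟩, rfl⟩ (Submodule.smul_mem _ _ hprev)
  have hX : U • x0 s + U ^ (s+2) • y2 s ∈ LinearMap.range d := by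
    have hTs := hT (s-1) (by omega)
    have hre : (s-1) + 1 = s := by omega
    rw [hre] at hTs
    have hLL : (⟨s-1, by omega⟩ : Fin s) = L := rfl
    rw [hLL] at hTs
    have key : U • x0 s + U ^ (s+2) • y2 s
        = d (U • x1 s L) + U^2 • (U • y1 s L + U^s • y2 s) := by
      rw [map_smul, hx1s, smul_add, smul_add, smul_smul, smul_smul, smul_smul,
        show U * U^2 = U^3 by ring, show U^2 * U = U^3 by ring,
        show U^2 * U^s = U^(s+2) by ring]
      rw [add_add_add_comm, htwoM, zero_add]
    rw [key]
    exact Submodule.add_mem _ ⟨U • x1 s L, rfl⟩ (Submodule.smul_mem _ _ hTs)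
  -- kernel element decomposition
  have hdecomp : ∀ k : M s, d k = 0 → k + fmap s k • y2 s
      = (∑ j : Fin s, k (Sum.inr (Sum.inr j)) • (y1 s j + (U^(j:ℕ)) • y2 s))
        + k (Sum.inl 2) • (x0 s + (U^(s+1)) • y2 s) := by
    intro k hk
    obtain ⟨hα, hβ⟩ := hker k hk
    funext w
    simp only [Pi.add_apply, Pi.smul_apply, Finset.sum_apply, smul_eq_mul, fmap,
      LinearMap.coe_mk, AddHom.coe_mk]
    rcases w with w | w
    · fin_cases w
      · simp [y2, y1, x0, Pi.single_apply, hα]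
      · simp only [y2, y1, x0, Pi.single_apply, if_true, mul_one, mul_zero]
        simp [mul_ite]
        have hsum : (∑ j : Fin s, U ^ (j:ℕ) * k (Sum.inr (Sum.inr j)))
            = ∑ j : Fin s, k (Sum.inr (Sum.inr j)) * U ^ (j:ℕ) :=
          Finset.sum_congr rfl fun i _ => mul_comm _ _
        linear_combination (k (Sum.inl 1)) * (CharTwo.two_eq_zero : (2:R) = 0) + hsum
      · simp [y2, y1, x0, Pi.single_apply]
    · rcases w with w | w
      · simp [y2, y1, x0, Pi.single_apply, hβ w]
      · simp [y2, y1, x0, Pi.single_apply, mul_ite]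
  -- main membership
  have hmem : ∀ k : M s, d k = 0 → U • (k + fmap s k • y2 s) ∈ LinearMap.range d := by
    intro k hk
    rw [hdecomp k hk, smul_add, Finset.smul_sum]
    refine Submodule.add_mem _ (Submodule.sum_mem _ fun j _ => ?_) ?_
    · rw [smul_comm]
      refine Submodule.smul_mem _ _ ?_
      rw [smul_add, smul_smul, show U * U^(j:ℕ) = U^((j:ℕ)+1) from (pow_succ' U (j:ℕ)).symm]
      exact hT (j:ℕ) j.isLt
    · rw [smul_comm]
      refine Submodule.smul_mem _ _ ?_
      rw [smul_add, smul_smul, show U * U^(s+1) = U^(s+2) from (pow_succ' U (s+1)).symm]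
      exact hX
  -- now the two claims
  have hz : y2 s ∈ LinearMap.ker d := LinearMap.mem_ker.mpr hy2
  constructor
  · apply LinearMap.ext; intro m
    rw [LinearMap.comp_apply, LinearMap.zero_apply, hdk m, map_add, map_smul, map_sum]
    have h1 : d (d (x2 s)) = 0 := by
      rw [hx2, map_add, map_smul, map_smul, hy2, hy1]; simp
    have h2 : ∀ j : Fin s, d (d (x1 s j)) = 0 := by
      intro j; by_cases hjs : (j:ℕ)+1 < s
      · rw [hx1 j hjs, map_add, map_smul, map_smul, hy1, hy1]; simp
      · rw [hlast j hjs, hx1s, map_add, map_smul, hy1, hx0]; simp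
    rw [h1, smul_zero, zero_add]
    rw [Finset.sum_congr rfl (fun j _ => by rw [map_smul, h2 j, smul_zero])]
    simp
  · refine ⟨hz, ?_⟩
    have hf1 : (LinearMap.range d).comap (LinearMap.ker d).subtype
        ≤ LinearMap.ker ((fmap s) ∘ₗ (LinearMap.ker d).subtype) := by
      rintro ⟨m, hm⟩ hmem'
      obtain ⟨w, hw⟩ := Submodule.mem_comap.mp hmem'
      simp only [LinearMap.mem_ker, LinearMap.comp_apply, Submodule.coe_subtype]
      have : m = d w := by
        have := hw
        simp only [Submodule.coe_subtype] at this
        exact this.symm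
      rw [this]
      exact hfd w
    set f2 := Submodule.liftQ _ ((fmap s) ∘ₗ (LinearMap.ker d).subtype) hf1 with hf2
    have hf2T : Submodule.torsion' R
        (LinearMap.ker d ⧸ (LinearMap.range d).comap (LinearMap.ker d).subtype)
        (Submonoid.powers U) ≤ LinearMap.ker f2 := by
      intro h hh
      obtain ⟨⟨u, hu⟩, h0⟩ := hh
      obtain ⟨n, rfl⟩ := hu
      have h1 : U^n * f2 h = 0 := by
        rw [← smul_eq_mul, ← map_smul, show (U^n : R) • h = 0 from h0, map_zero]
      have hUn : (U:R)^n ≠ 0 := pow_ne_zero _ U_ne_zero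
      exact LinearMap.mem_ker.mpr ((mul_eq_zero.mp h1).resolve_left hUn)
    set φ := Submodule.liftQ _ f2 hf2T with hφ
    have hφy2 : φ (Submodule.Quotient.mk (Submodule.Quotient.mk ⟨y2 s, hz⟩)) = 1 := by
      rw [hφ, Submodule.liftQ_apply, hf2, Submodule.liftQ_apply]
      simpa using fmap_y2 s
    constructor
    · intro r1 r2 hr
      have h := congrArg φ hr
      simpa only [LinearMap.toSpanSingleton_apply, map_smul, hφy2, smul_eq_mul,
        mul_one] using h
    · intro q
      obtain ⟨h1, rfl⟩ := Submodule.Quotient.mk_surjective _ q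
      obtain ⟨kk, rfl⟩ := Submodule.Quotient.mk_surjective _ h1
      obtain ⟨k, hk⟩ := kk
      have hk' : d k = 0 := hk
      refine ⟨fmap s k, ?_⟩
      rw [LinearMap.toSpanSingleton_apply]
      rw [← Submodule.Quotient.mk_smul]
      rw [← Submodule.Quotient.mk_smul]
      rw [Submodule.Quotient.eq]
      refine ⟨⟨U, Submonoid.mem_powers U⟩, ?_⟩
      rw [show (⟨U, Submonoid.mem_powers U⟩ : (Submonoid.powers U)) •
          (Submodule.Quotient.mk ((fmap s) k • (⟨y2 s, hz⟩ : LinearMap.ker d))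
            - Submodule.Quotient.mk (⟨k, hk⟩ : LinearMap.ker d))
          = U • (Submodule.Quotient.mk ((fmap s) k • (⟨y2 s, hz⟩ : LinearMap.ker d))
            - Submodule.Quotient.mk (⟨k, hk⟩ : LinearMap.ker d)) from rfl]
      rw [← Submodule.Quotient.mk_sub]
      rw [← Submodule.Quotient.mk_smul]
      rw [Submodule.Quotient.mk_eq_zero]
      rw [Submodule.mem_comap]
      have hcoe : ((LinearMap.ker d).subtype
          (U • (fmap s k • (⟨y2 s, hz⟩ : LinearMap.ker d) - ⟨k, hk⟩)))
          = U • (k + fmap s k • y2 s) := by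
        simp only [Submodule.coe_subtype, Submodule.coe_smul, Submodule.coe_sub,
          SetLike.val_smul]
        congr 1
        rw [sub_eq_add_neg, hnegM, add_comm]
      rw [hcoe]
      exact hmem k hk'
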